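/- arXiv:2605.11356 — 2 statements merged into one kernel-verified Lean document; each statement's English description precedes it below -/
import Mathlib

section
/- (Leakage certificate.) Let u_A, u_F be independent random row vectors, each uniform, on F_2^{1×a} and F_2^{1×f} respectively. Let G_{A,P} ∈ F_2^{a×p}, G_{F,P} ∈ F_2^{f×p}, let G_P ∈ F_2^{(a+f)×p} be the vertical stacking of G_{A,P} on top of G_{F,P}, and set x_P = u_A*G_{A,P} ⊕ u_F*G_{F,P}. Then the mutual information (in bits, base 2) between the information bits and the published coordinates satisfies I(u_A ; x_P) = rank(G_P) − rank(G_{F,P}). -/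
open scoped ENNReal

/-- Shannon entropy (in bits, base 2) of a probability mass function on a finite type. -/
noncomputable def pmfEntropy {α : Type*} [Fintype α] (q : PMF α) : ℝ :=
  -∑ x : α, ((q x).toReal * Real.logb 2 (q x).toReal)

/-- Conditional Shannon entropy `H(Y | X)` (in bits, base 2):
`H(Y|X) = -∑_{x,y} P(X=x, Y=y) log₂( P(X=x, Y=y) / P(X=x) )`. -/
noncomputable def condEntropy {Ω α β : Type*} [Fintype α] [Fintype β]
    (μ : PMF Ω) (Y : Ω → β) (X : Ω → α) : ℝ :=
  -∑ x : α, ∑ y : β,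
    ((μ.map fun ω => (X ω, Y ω)) (x, y)).toReal *
      Real.logb 2
        (((μ.map fun ω => (X ω, Y ω)) (x, y)).toReal / ((μ.map X) x).toReal)

/-- Mutual information `I(X;Y) = H(Y) − H(Y|X)` (in bits, base 2). -/
noncomputable def mutualInfo {Ω α β : Type*} [Fintype α] [Fintype β]
    (μ : PMF Ω) (X : Ω → α) (Y : Ω → β) : ℝ :=
  pmfEntropy (μ.map Y) - condEntropy μ Y X

section Helpers

open Finset Matrix

lemma sum_ite_card' {γ : Type*} [Fintype γ] (P : γ → Prop) [DecidablePred P] (c : ℝ) :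
    ∑ y : γ, (if P y then c else 0) = (Nat.card {y : γ // P y} : ℝ) * c := by
  rw [Finset.sum_ite, Finset.sum_const, Finset.sum_const]
  simp [nsmul_eq_mul, Nat.card_eq_fintype_card, Fintype.card_subtype]

lemma pmf_map_apply_fintype {Ω γ : Type*} [Fintype Ω] [DecidableEq γ]
    (μ : PMF Ω) (g : Ω → γ) (y : γ) :
    μ.map g y = ∑ z : Ω, if y = g z then μ z else 0 := by
  rw [PMF.map_apply, tsum_fintype]
  refine Finset.sum_congr rfl fun z _ => ?_
  by_cases h : y = g z <;> simp [h]

lemma pmf_map_const {Ω γ : Type*} [Fintype Ω] [DecidableEq γ]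
    (μ : PMF Ω) (c : ℝ≥0∞) (hμ : ∀ z, μ z = c) (g : Ω → γ) (y : γ) :
    μ.map g y = (Nat.card {z : Ω // y = g z} : ℝ≥0∞) * c := by
  classical
  rw [pmf_map_apply_fintype]
  have : ∀ z : Ω, (if y = g z then μ z else 0) = (if y = g z then c else 0) := by
    intro z; by_cases h : y = g z <;> simp [h, hμ]
  rw [Finset.sum_congr rfl fun z _ => this z, Finset.sum_ite, Finset.sum_const,
    Finset.sum_const]
  simp [nsmul_eq_mul, Nat.card_eq_fintype_card, Fintype.card_subtype]

lemma fiber_card_eq_card_ker {V W : Type*} [AddCommGroup V] [Module (ZMod 2) V]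
    [AddCommGroup W] [Module (ZMod 2) W]
    (L : V →ₗ[ZMod 2] W) (y : W) (hy : y ∈ LinearMap.range L) :
    Nat.card {v : V // y = L v} = Nat.card (LinearMap.ker L) := by
  classical
  obtain ⟨v0, hv0⟩ := hy
  exact Nat.card_congr
    (show {v : V // y = L v} ≃ LinearMap.ker L from
    { toFun := fun v => ⟨v.1 - v0, by
        have := v.2
        simp [LinearMap.mem_ker, map_sub, hv0, ← this]⟩
      invFun := fun k => ⟨v0 + k.1, by
        have := k.2
        simp only [LinearMap.mem_ker] at this
        simp [map_add, hv0, this]⟩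
      left_inv := by intro v; simp
      right_inv := by intro k; simp })

lemma fiber_card_zero {V W : Type*}
    (L : V → W) (y : W) (hy : ∀ v, L v ≠ y) :
    Nat.card {v : V // y = L v} = 0 := by
  haveI : IsEmpty {v : V // y = L v} := ⟨fun v => hy v.1 v.2.symm⟩
  exact Nat.card_of_isEmpty

lemma ennreal_mul_inv_eq {k m n : ℕ} (hk : k ≠ 0) (h : k * m = n) :
    (k : ℝ≥0∞) * ((n : ℕ) : ℝ≥0∞)⁻¹ = ((m : ℕ) : ℝ≥0∞)⁻¹ := by
  subst h
  rw [Nat.cast_mul, ENNReal.mul_inv (by simp [hk]) (by simp), ← mul_assoc,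
      ENNReal.mul_inv_cancel (by exact_mod_cast hk) (by simp), one_mul]

lemma toReal_pow_inv (k : ℕ) : (((2 ^ k : ℕ) : ℝ≥0∞))⁻¹.toReal = ((2:ℝ) ^ k)⁻¹ := by
  rw [ENNReal.toReal_inv, ENNReal.toReal_natCast]
  norm_cast

lemma logb_two_pow_inv (k : ℕ) : Real.logb 2 (((2:ℝ) ^ k)⁻¹) = -k := by
  rw [Real.logb_inv, Real.logb_pow]
  simp [Real.logb_self_eq_one]

end Helpers

set_option maxHeartbeats 2000000 in
/-- Leakage certificate: Let `u_A`, `u_F` be independent and uniform on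
`F_2^{1×a}` and `F_2^{1×f}`, `G_P` the vertical stacking of `G_{A,P}` on `G_{F,P}`,
and `x_P = u_A * G_{A,P} ⊕ u_F * G_{F,P}`. Then
`I(u_A ; x_P) = rank(G_P) − rank(G_{F,P})`. -/
theorem leakage_certificate (a f p : ℕ)
    (GAP : Matrix (Fin a) (Fin p) (ZMod 2)) (GFP : Matrix (Fin f) (Fin p) (ZMod 2))
    (μ : PMF ((Fin a → ZMod 2) × (Fin f → ZMod 2)))
    (huA : ∀ x : Fin a → ZMod 2,
      μ.map Prod.fst x = (Fintype.card (Fin a → ZMod 2) : ℝ≥0∞)⁻¹)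
    (huF : ∀ y : Fin f → ZMod 2,
      μ.map Prod.snd y = (Fintype.card (Fin f → ZMod 2) : ℝ≥0∞)⁻¹)
    (hindep : ∀ (x : Fin a → ZMod 2) (y : Fin f → ZMod 2),
      μ (x, y) = μ.map Prod.fst x * μ.map Prod.snd y) :
    mutualInfo μ Prod.fst
        (fun ω => Matrix.vecMul ω.1 GAP + Matrix.vecMul ω.2 GFP)
      = ((Matrix.fromRows GAP GFP).rank : ℝ) - (GFP.rank : ℝ) := by
  classical
  haveI : Fact (Nat.Prime 2) := ⟨Nat.prime_two⟩
  set T : ((Fin a → ZMod 2) × (Fin f → ZMod 2)) →ₗ[ZMod 2] (Fin p → ZMod 2) :=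
    LinearMap.coprod GAP.vecMulLinear GFP.vecMulLinear with hT
  set S : (Fin f → ZMod 2) →ₗ[ZMod 2] (Fin p → ZMod 2) := GFP.vecMulLinear with hS
  set r := Module.finrank (ZMod 2) (LinearMap.range T) with hr
  set s := Module.finrank (ZMod 2) (LinearMap.range S) with hs
  -- rank identifications
  have hrankS : GFP.rank = s := by
    have h1 : S = GFP.transpose.mulVecLin := by
      rw [hS, ← Matrix.vecMulLinear_transpose, Matrix.transpose_transpose]
    rw [← Matrix.rank_transpose GFP, hs, h1]
    rfl
  have hrangeT : LinearMap.range T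
      = LinearMap.range (Matrix.fromRows GAP GFP).vecMulLinear := by
    apply le_antisymm
    · rintro w ⟨⟨x, u⟩, rfl⟩
      exact ⟨Sum.elim x u, by
        simp [hT, hS, Matrix.vecMulLinear_apply, Matrix.sumElim_vecMul_fromRows]⟩
    · rintro w ⟨v, rfl⟩
      refine ⟨(v ∘ Sum.inl, v ∘ Sum.inr), ?_⟩
      have := Matrix.sumElim_vecMul_fromRows GAP GFP (v ∘ Sum.inl) (v ∘ Sum.inr)
      rw [Sum.elim_comp_inl_inr] at this
      simp [hT, hS, Matrix.vecMulLinear_apply, this]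
  have hrankT : (Matrix.fromRows GAP GFP).rank = r := by
    have h1 : (Matrix.fromRows GAP GFP).vecMulLinear
        = ((Matrix.fromRows GAP GFP).transpose).mulVecLin := by
      rw [← Matrix.vecMulLinear_transpose, Matrix.transpose_transpose]
    rw [← Matrix.rank_transpose (Matrix.fromRows GAP GFP), hr, hrangeT, h1]
    rfl
  -- the evaluation of T
  have hTapp : ∀ ω : (Fin a → ZMod 2) × (Fin f → ZMod 2),
      T ω = Matrix.vecMul ω.1 GAP + Matrix.vecMul ω.2 GFP := by
    intro ω
    simp [hT, hS, Matrix.vecMulLinear_apply]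
  -- cardinalities
  have hcardA : Fintype.card (Fin a → ZMod 2) = 2 ^ a := by
    simp [ZMod.card]
  have hcardB : Fintype.card (Fin f → ZMod 2) = 2 ^ f := by
    simp [ZMod.card]
  have hcardV : Fintype.card ((Fin a → ZMod 2) × (Fin f → ZMod 2)) = 2 ^ (a + f) := by
    simp [Fintype.card_prod, hcardA, hcardB, pow_add]
  have hfinV : Module.finrank (ZMod 2) ((Fin a → ZMod 2) × (Fin f → ZMod 2)) = a + f := by
    simp [Module.finrank_prod, Module.finrank_fintype_fun_eq_card]
  have hfinB : Module.finrank (ZMod 2) (Fin f → ZMod 2) = f := by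
    simp [Module.finrank_fintype_fun_eq_card]
  -- kernel cardinalities
  have hkerT : Nat.card (LinearMap.ker T) * 2 ^ r = 2 ^ (a + f) := by
    have h1 := LinearMap.finrank_range_add_finrank_ker T
    rw [hfinV, ← hr] at h1
    haveI : Fintype (LinearMap.ker T) := Fintype.ofFinite _
    rw [Nat.card_eq_fintype_card, Module.card_eq_pow_finrank (K := ZMod 2), ZMod.card, ← pow_add]
    congr 1
    omega
  have hkerS : Nat.card (LinearMap.ker S) * 2 ^ s = 2 ^ f := by
    have h1 := LinearMap.finrank_range_add_finrank_ker S
    rw [hfinB, ← hs] at h1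
    haveI : Fintype (LinearMap.ker S) := Fintype.ofFinite _
    rw [Nat.card_eq_fintype_card, Module.card_eq_pow_finrank (K := ZMod 2), ZMod.card, ← pow_add]
    congr 1
    omega
  have hkerTpos : Nat.card (LinearMap.ker T) ≠ 0 := Nat.card_pos.ne'
  have hkerSpos : Nat.card (LinearMap.ker S) ≠ 0 := Nat.card_pos.ne'
  -- uniformity of μ
  have hμz : ∀ z : (Fin a → ZMod 2) × (Fin f → ZMod 2),
      μ z = (((2 ^ (a + f) : ℕ) : ℝ≥0∞))⁻¹ := by
    intro z
    have := hindep z.1 z.2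
    rw [huA, huF, hcardA, hcardB] at this
    rw [show z = (z.1, z.2) from rfl, this, ← ENNReal.mul_inv (by simp) (by simp)]
    rw [← Nat.cast_mul, ← pow_add]
  -- pushforward of Y
  have hmapY : ∀ y : Fin p → ZMod 2,
      μ.map (fun ω => Matrix.vecMul ω.1 GAP + Matrix.vecMul ω.2 GFP) y
        = if y ∈ LinearMap.range T then (((2 ^ r : ℕ) : ℝ≥0∞))⁻¹ else 0 := by
    intro y
    have hfun : (fun ω : (Fin a → ZMod 2) × (Fin f → ZMod 2) =>
        Matrix.vecMul ω.1 GAP + Matrix.vecMul ω.2 GFP) = fun ω => T ω := by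
      funext ω; rw [hTapp]
    rw [hfun, pmf_map_const μ _ hμz]
    by_cases hy : y ∈ LinearMap.range T
    · rw [if_pos hy, fiber_card_eq_card_ker T y hy, ennreal_mul_inv_eq hkerTpos hkerT]
    · rw [if_neg hy, fiber_card_zero (fun z => T z) y (fun v hv => hy ⟨v, hv⟩)]
      simp
  -- cardinality of range T
  have hcardRT : Nat.card {y : Fin p → ZMod 2 // y ∈ LinearMap.range T} = 2 ^ r := by
    rw [Nat.card_congr
      (Equiv.subtypeEquivRight (fun _ => Iff.rfl) :
        {y : Fin p → ZMod 2 // y ∈ LinearMap.range T} ≃ LinearMap.range T)]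
    haveI : Fintype (LinearMap.range T) := Fintype.ofFinite _
    rw [Nat.card_eq_fintype_card, Module.card_eq_pow_finrank (K := ZMod 2), ZMod.card, hr]
  -- entropy of Y
  have hHY : pmfEntropy (μ.map (fun ω => Matrix.vecMul ω.1 GAP + Matrix.vecMul ω.2 GFP))
      = (r : ℝ) := by
    unfold pmfEntropy
    have h1 : ∀ y : Fin p → ZMod 2,
        ((μ.map (fun ω => Matrix.vecMul ω.1 GAP + Matrix.vecMul ω.2 GFP)) y).toReal *
          Real.logb 2
            ((μ.map (fun ω => Matrix.vecMul ω.1 GAP + Matrix.vecMul ω.2 GFP)) y).toReal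
        = if y ∈ LinearMap.range T
            then ((2:ℝ) ^ r)⁻¹ * Real.logb 2 (((2:ℝ) ^ r)⁻¹) else 0 := by
      intro y
      rw [hmapY]
      by_cases hy : y ∈ LinearMap.range T
      · rw [if_pos hy, if_pos hy, toReal_pow_inv]
      · rw [if_neg hy, if_neg hy]; simp
    rw [Finset.sum_congr rfl fun y _ => h1 y, sum_ite_card', hcardRT, logb_two_pow_inv]
    push_cast
    field_simp
  -- joint distribution values
  have hmapJ : ∀ (x : Fin a → ZMod 2) (y : Fin p → ZMod 2),
      (μ.map fun ω => (ω.1, Matrix.vecMul ω.1 GAP + Matrix.vecMul ω.2 GFP)) (x, y)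
        = if y - Matrix.vecMul x GAP ∈ LinearMap.range S
            then (((2 ^ (a + s) : ℕ) : ℝ≥0∞))⁻¹ else 0 := by
    intro x y
    rw [pmf_map_const μ _ hμz]
    have hcount : Nat.card {z : (Fin a → ZMod 2) × (Fin f → ZMod 2) //
          (x, y) = (z.1, Matrix.vecMul z.1 GAP + Matrix.vecMul z.2 GFP)}
        = Nat.card {u : Fin f → ZMod 2 //
            y - Matrix.vecMul x GAP = S u} := by
      refine Nat.card_congr ?_
      refine
        { toFun := fun z => ⟨z.1.2, ?_⟩
          invFun := fun u => ⟨(x, u.1), ?_⟩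
          left_inv := ?_
          right_inv := ?_ }
      · obtain ⟨⟨z1, z2⟩, hz⟩ := z
        have h1 : x = z1 := congrArg Prod.fst hz
        have h2 : y = Matrix.vecMul z1 GAP + Matrix.vecMul z2 GFP :=
          congrArg Prod.snd hz
        show y - Matrix.vecMul x GAP = S z2
        rw [hS, Matrix.vecMulLinear_apply, h2, h1, add_sub_cancel_left]
      · obtain ⟨u, hu⟩ := u
        rw [hS, Matrix.vecMulLinear_apply] at hu
        have h3 : y = Matrix.vecMul x GAP + Matrix.vecMul u GFP :=
          sub_eq_iff_eq_add'.mp hu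
        show ((x : Fin a → ZMod 2), y) = _
        simp only [Prod.mk.injEq]
        exact ⟨trivial, h3⟩
      · rintro ⟨⟨z1, z2⟩, hz⟩
        have h1 : x = z1 := congrArg Prod.fst hz
        apply Subtype.ext
        show ((x : Fin a → ZMod 2), z2) = (z1, z2)
        rw [h1]
      · rintro ⟨u, hu⟩
        exact Subtype.ext rfl
    rw [hcount]
    by_cases hy : y - Matrix.vecMul x GAP ∈ LinearMap.range S
    · rw [if_pos hy, fiber_card_eq_card_ker S _ hy]
      refine ennreal_mul_inv_eq hkerSpos ?_
      rw [pow_add, ← mul_assoc, mul_comm (Nat.card (LinearMap.ker S)) (2 ^ a),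
        mul_assoc, hkerS, ← pow_add]
    · rw [if_neg hy, fiber_card_zero (fun u => S u) _ (fun v hv => hy ⟨v, hv⟩)]
      simp
  -- cardinality of each coset slice
  have hcoset : ∀ x : Fin a → ZMod 2,
      Nat.card {y : Fin p → ZMod 2 //
        y - Matrix.vecMul x GAP ∈ LinearMap.range S} = 2 ^ s := by
    intro x
    have he : {y : Fin p → ZMod 2 // y - Matrix.vecMul x GAP ∈ LinearMap.range S}
        ≃ LinearMap.range S :=
      { toFun := fun y => ⟨y.1 - Matrix.vecMul x GAP, y.2⟩
        invFun := fun w => ⟨w.1 + Matrix.vecMul x GAP, by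
          simp [add_sub_cancel_right, w.2]⟩
        left_inv := by rintro ⟨y, hy⟩; simp
        right_inv := by rintro ⟨w, hw⟩; simp }
    rw [Nat.card_congr he]
    haveI : Fintype (LinearMap.range S) := Fintype.ofFinite _
    rw [Nat.card_eq_fintype_card, Module.card_eq_pow_finrank (K := ZMod 2), ZMod.card, hs]
  -- conditional entropy
  have hHC : condEntropy μ (fun ω => Matrix.vecMul ω.1 GAP + Matrix.vecMul ω.2 GFP)
      Prod.fst = (s : ℝ) := by
    unfold condEntropy
    have hinner : ∀ x : Fin a → ZMod 2,
        ∑ y : Fin p → ZMod 2,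
          ((μ.map fun ω => (ω.1, Matrix.vecMul ω.1 GAP + Matrix.vecMul ω.2 GFP))
              (x, y)).toReal *
            Real.logb 2
              (((μ.map fun ω => (ω.1, Matrix.vecMul ω.1 GAP + Matrix.vecMul ω.2 GFP))
                  (x, y)).toReal / ((μ.map Prod.fst) x).toReal)
        = ((2:ℝ) ^ a)⁻¹ * (-(s : ℝ)) := by
      intro x
      have hterm : ∀ y : Fin p → ZMod 2,
          ((μ.map fun ω => (ω.1, Matrix.vecMul ω.1 GAP + Matrix.vecMul ω.2 GFP))
              (x, y)).toReal *
            Real.logb 2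
              (((μ.map fun ω => (ω.1, Matrix.vecMul ω.1 GAP + Matrix.vecMul ω.2 GFP))
                  (x, y)).toReal / ((μ.map Prod.fst) x).toReal)
          = if y - Matrix.vecMul x GAP ∈ LinearMap.range S
              then ((2:ℝ) ^ (a + s))⁻¹ * (-(s : ℝ)) else 0 := by
        intro y
        have hm : ((μ.map Prod.fst) x).toReal = ((2:ℝ) ^ a)⁻¹ := by
          rw [huA, hcardA]
          exact toReal_pow_inv a
        rw [hmapJ]
        by_cases hy : y - Matrix.vecMul x GAP ∈ LinearMap.range S
        · rw [if_pos hy, if_pos hy, hm]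
          rw [toReal_pow_inv]
          have hq : ((2:ℝ) ^ (a + s))⁻¹ / ((2:ℝ) ^ a)⁻¹ = ((2:ℝ) ^ s)⁻¹ := by
            rw [pow_add]
            field_simp
          rw [hq, logb_two_pow_inv]
        · rw [if_neg hy, if_neg hy]; simp
      rw [Finset.sum_congr rfl fun y _ => hterm y, sum_ite_card', hcoset]
      push_cast
      rw [pow_add]
      field_simp
    rw [Finset.sum_congr rfl fun x _ => hinner x, Finset.sum_const, Finset.card_univ, hcardA]
    rw [nsmul_eq_mul]
    push_cast
    field_simp
  rw [mutualInfo, hHY, hHC, hrankT, hrankS]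
end

section
/- (Zero leakage implies independence.) Let u_A be a random row vector in F_2^{1×a} and u_F a random row vector uniform on F_2^{1×f} and independent of u_A. Let G_{A,P} ∈ F_2^{a×p} and G_{F,P} ∈ F_2^{f×p} be such that every row of G_{A,P} lies in the row space of G_{F,P}. Then x_P = u_A*G_{A,P} ⊕ u_F*G_{F,P} is independent of u_A (so the public observation reveals no information about the information bits). -/
open scoped ENNReal

/-- Zero leakage implies independence: Let `(u_A, u_F)` have joint
distribution `μ` with `u_F` uniform on `F_2^{1×f}` and independent of `u_A`. If every
row of `G_{A,P}` lies in the row space of `G_{F,P}`, then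
`x_P = u_A * G_{A,P} ⊕ u_F * G_{F,P}` is independent of `u_A`. -/
theorem zero_leakage_implies_independence (a f p : ℕ)
    (GAP : Matrix (Fin a) (Fin p) (ZMod 2)) (GFP : Matrix (Fin f) (Fin p) (ZMod 2))
    (hrows : ∀ i : Fin a,
      GAP i ∈ Submodule.span (ZMod 2) (Set.range fun j : Fin f => GFP j))
    (μ : PMF ((Fin a → ZMod 2) × (Fin f → ZMod 2)))
    (huF : ∀ y : Fin f → ZMod 2,
      μ.map Prod.snd y = (Fintype.card (Fin f → ZMod 2) : ℝ≥0∞)⁻¹)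
    (hindep : ∀ (x : Fin a → ZMod 2) (y : Fin f → ZMod 2),
      μ (x, y) = μ.map Prod.fst x * μ.map Prod.snd y) :
    ∀ (x : Fin a → ZMod 2) (w : Fin p → ZMod 2),
      (μ.map fun ω => (ω.1, Matrix.vecMul ω.1 GAP + Matrix.vecMul ω.2 GFP)) (x, w)
        = μ.map Prod.fst x *
            (μ.map fun ω => Matrix.vecMul ω.1 GAP + Matrix.vecMul ω.2 GFP) w := by
  classical
  intro x w
  set c : ℝ≥0∞ := (Fintype.card (Fin f → ZMod 2) : ℝ≥0∞)⁻¹ with hcdef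
  -- key: the indicator sum over y does not depend on x'
  have key : ∀ x' : Fin a → ZMod 2,
      (∑ y : Fin f → ZMod 2,
        if w = Matrix.vecMul x' GAP + Matrix.vecMul y GFP then c else 0)
      = ∑ y : Fin f → ZMod 2, if w = Matrix.vecMul y GFP then c else 0 := by
    intro x'
    have hmem : Matrix.vecMul x' GAP ∈ LinearMap.range (Matrix.vecMulLinear GFP) := by
      rw [range_vecMulLinear]
      have h1 : Matrix.vecMul x' GAP ∈ LinearMap.range (Matrix.vecMulLinear GAP) :=
        ⟨x', rfl⟩
      rw [range_vecMulLinear] at h1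
      exact Submodule.span_le.2 (Set.range_subset_iff.2 hrows) h1
    obtain ⟨y0, hy0⟩ := hmem
    rw [Matrix.vecMulLinear_apply] at hy0
    refine Fintype.sum_equiv (Equiv.addRight y0) _ _ ?_
    intro y
    simp only [Equiv.coe_addRight, Matrix.add_vecMul, hy0, add_comm]
  -- LHS
  have hL : (μ.map fun ω => (ω.1, Matrix.vecMul ω.1 GAP + Matrix.vecMul ω.2 GFP)) (x, w)
      = ∑ y : Fin f → ZMod 2,
          if w = Matrix.vecMul x GAP + Matrix.vecMul y GFP then μ (x, y) else 0 := by
    rw [PMF.map_apply, tsum_fintype, Fintype.sum_prod_type]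
    rw [Finset.sum_eq_single x]
    · refine Finset.sum_congr rfl fun y _ => ?_
      simp [Prod.ext_iff]
    · intro b _ hb
      refine Finset.sum_eq_zero fun y _ => ?_
      rw [if_neg]
      intro h
      exact hb (congrArg Prod.fst h).symm
    · intro h; exact absurd (Finset.mem_univ x) h
  -- RHS second factor
  have hR : (μ.map fun ω => Matrix.vecMul ω.1 GAP + Matrix.vecMul ω.2 GFP) w
      = ∑ y : Fin f → ZMod 2, if w = Matrix.vecMul y GFP then c else 0 := by
    rw [PMF.map_apply, tsum_fintype, Fintype.sum_prod_type]
    have : ∀ x' : Fin a → ZMod 2,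
        (∑ y : Fin f → ZMod 2,
          if w = Matrix.vecMul x' GAP + Matrix.vecMul y GFP then μ (x', y) else 0)
        = μ.map Prod.fst x' *
            ∑ y : Fin f → ZMod 2, if w = Matrix.vecMul y GFP then c else 0 := by
      intro x'
      rw [← key x', Finset.mul_sum]
      refine Finset.sum_congr rfl fun y _ => ?_
      rw [hindep, huF, mul_ite, mul_zero]
    have hone : (∑ x' : Fin a → ZMod 2, μ.map Prod.fst x') = 1 := by
      rw [← tsum_fintype (L := SummationFilter.unconditional _)]
      exact (μ.map Prod.fst).tsum_coe
    refine Eq.trans (Finset.sum_congr rfl fun x' _ =>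
      Eq.trans (Finset.sum_congr rfl fun y _ => @if_congr _ _ _ (Classical.propDecidable _) _ _ _ _ _ Iff.rfl rfl rfl) (this x')) ?_
    rw [← Finset.sum_mul, hone, one_mul]
  rw [hL, hR, ← key x, Finset.mul_sum]
  refine Finset.sum_congr rfl fun y _ => ?_
  rw [hindep, huF, mul_ite, mul_zero]
end
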